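/- For any set P of four points in the plane, one can assign to each point p ∈ P a closed quadrant (wedge of angle π/2) W_p with apex p such that: (i) the graph on P with edges {p,q} whenever q ∈ W_p and p ∈ W_q is connected, and (ii) the union of the four wedges is the entire plane. -/

import Mathlib

open Real Complex

/-- The wedge (directional-antenna coverage region) with apex `p`, orientation `θ`
and angle `α`. -/
def Wedge (p : ℂ) (θ α : ℝ) : Set ℂ :=
  {x | ∃ r : ℝ, 0 ≤ r ∧ ∃ t ∈ Set.Icc 0 α,
    x = p + (r : ℂ) * Complex.exp ((θ + t : ℝ) * Complex.I)}

open ComplexConjugate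

set_option maxHeartbeats 2000000

private lemma aux_sign (a t : ℝ) (ha : 0 < a) : 0 ≤ a * t ↔ 0 ≤ t := by
  constructor
  · intro h; nlinarith
  · intro h; exact mul_nonneg ha.le h

lemma wedge_mem_iff (p x : ℂ) (θ : ℝ) :
    x ∈ Wedge p θ (π/2) ↔
      0 ≤ ((x - p) * Complex.exp (-(θ:ℂ) * Complex.I)).re ∧
      0 ≤ ((x - p) * Complex.exp (-(θ:ℂ) * Complex.I)).im := by
  constructor
  · rintro ⟨r, hr, t, ⟨ht0, ht1⟩, hx⟩
    have hxp : x - p = (r:ℂ) * Complex.exp ((↑(θ + t)) * Complex.I) := by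
      rw [hx]; ring
    have key : (x - p) * Complex.exp (-(θ:ℂ) * Complex.I)
        = (r:ℂ) * Complex.exp ((t:ℂ) * Complex.I) := by
      have harg : ((↑(θ + t)) * Complex.I) + (-(θ:ℂ) * Complex.I) = (t:ℂ) * Complex.I := by
        push_cast; ring
      rw [hxp, mul_assoc, ← Complex.exp_add, harg]
    rw [key]
    constructor
    · have : ((r:ℂ) * Complex.exp ((t:ℂ) * Complex.I)).re = r * Real.cos t := by
        simp [Complex.mul_re, Complex.exp_ofReal_mul_I_re, Complex.exp_ofReal_mul_I_im]
      rw [this]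
      have hc : 0 ≤ Real.cos t :=
        Real.cos_nonneg_of_mem_Icc ⟨by linarith [Real.pi_pos], ht1⟩
      exact mul_nonneg hr hc
    · have : ((r:ℂ) * Complex.exp ((t:ℂ) * Complex.I)).im = r * Real.sin t := by
        simp [Complex.mul_im, Complex.exp_ofReal_mul_I_re, Complex.exp_ofReal_mul_I_im]
      rw [this]
      have hs : 0 ≤ Real.sin t :=
        Real.sin_nonneg_of_nonneg_of_le_pi ht0 (by linarith [Real.pi_pos])
      exact mul_nonneg hr hs
  · rintro ⟨h1, h2⟩
    by_cases hz : (x - p) * Complex.exp (-(θ:ℂ) * Complex.I) = 0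
    · have hx : x = p := by
        rcases mul_eq_zero.mp hz with h | h
        · exact sub_eq_zero.mp h
        · exact absurd h (Complex.exp_ne_zero _)
      refine ⟨0, le_refl 0, 0, ⟨le_refl 0, by positivity⟩, ?_⟩
      rw [hx]; simp
    · set z := (x - p) * Complex.exp (-(θ:ℂ) * Complex.I) with hzdef
      refine ⟨‖z‖, norm_nonneg _, z.arg,
        ⟨Complex.arg_nonneg_iff.mpr h2, (abs_le.mp (Complex.abs_arg_le_pi_div_two_iff.mpr h1)).2⟩, ?_⟩
      have hz1 : (‖z‖ : ℂ) * Complex.exp ((z.arg :ℂ) * Complex.I) = z :=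
        Complex.norm_mul_exp_arg_mul_I z
      have hmain : (‖z‖ : ℂ) * Complex.exp ((↑(θ + z.arg)) * Complex.I) = x - p := by
        have hsplit : Complex.exp ((↑(θ + z.arg)) * Complex.I)
            = Complex.exp ((θ:ℂ) * Complex.I) * Complex.exp ((z.arg:ℂ) * Complex.I) := by
          rw [← Complex.exp_add]; congr 1; push_cast; ring
        rw [hsplit]
        calc (‖z‖ : ℂ) * (Complex.exp ((θ:ℂ) * Complex.I) * Complex.exp ((z.arg:ℂ) * Complex.I))
            = Complex.exp ((θ:ℂ) * Complex.I) * ((‖z‖ : ℂ) * Complex.exp ((z.arg:ℂ) * Complex.I)) := by ring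
          _ = Complex.exp ((θ:ℂ) * Complex.I) * z := by rw [hz1]
          _ = x - p := by
              rw [hzdef]
              rw [show Complex.exp ((θ:ℂ) * Complex.I) * ((x - p) * Complex.exp (-(θ:ℂ) * Complex.I))
                  = (x - p) * (Complex.exp ((θ:ℂ) * Complex.I) * Complex.exp (-(θ:ℂ) * Complex.I)) from by ring]
              rw [← Complex.exp_add]
              norm_num
      linear_combination -hmain

lemma wedge_mem_iff' (w : ℂ) (hw : w ≠ 0) (q x : ℂ) (δ : ℝ) (m : ℂ)
    (hm : Complex.exp (-(δ:ℂ) * Complex.I) = m) :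
    x ∈ Wedge q (w.arg + δ) (π/2) ↔
      0 ≤ ((x - q) * conj w * m).re ∧ 0 ≤ ((x - q) * conj w * m).im := by
  rw [wedge_mem_iff]
  have habs : 0 < ‖w‖ := norm_pos_iff.mpr hw
  have hc : (conj w : ℂ) = (‖w‖ : ℂ) * Complex.exp (-(w.arg : ℂ) * Complex.I) := by
    conv_lhs => rw [← Complex.norm_mul_exp_arg_mul_I w]
    rw [map_mul, Complex.conj_ofReal]
    congr 1
    rw [← Complex.exp_conj]
    congr 1
    simp [map_mul, Complex.conj_ofReal, Complex.conj_I]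
  have hsplit : Complex.exp (-(↑(w.arg + δ):ℂ) * Complex.I)
      = Complex.exp (-(w.arg:ℂ) * Complex.I) * m := by
    rw [← hm, ← Complex.exp_add]; congr 1; push_cast; ring
  have hkey : (x - q) * conj w * m
      = (‖w‖ : ℂ) * ((x - q) * Complex.exp (-(↑(w.arg + δ):ℂ) * Complex.I)) := by
    rw [hsplit, hc]; ring
  rw [hkey]
  have hre : ∀ Z : ℂ, ((‖w‖ : ℂ) * Z).re = ‖w‖ * Z.re := by
    intro Z; simp [Complex.mul_re]
  have him : ∀ Z : ℂ, ((‖w‖ : ℂ) * Z).im = ‖w‖ * Z.im := by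
    intro Z; simp [Complex.mul_im]
  rw [hre, him, aux_sign _ _ habs, aux_sign _ _ habs]

lemma exp_pi_div_two : Complex.exp ((↑(π/2) : ℂ) * Complex.I) = Complex.I := by
  rw [Complex.exp_mul_I]
  simp [← Complex.ofReal_cos, ← Complex.ofReal_sin, Real.cos_pi_div_two, Real.sin_pi_div_two]

lemma hm0 : Complex.exp (-((0:ℝ):ℂ) * Complex.I) = 1 := by norm_num

lemma hmB : Complex.exp (-((π/2:ℝ):ℂ) * Complex.I) = -Complex.I := by
  rw [show (-((π/2:ℝ):ℂ) * Complex.I) = -(((π/2:ℝ):ℂ) * Complex.I) by ring,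
    Complex.exp_neg, exp_pi_div_two, Complex.inv_I]

lemma hmC : Complex.exp (-((π:ℝ):ℂ) * Complex.I) = -1 := by
  rw [show (-((π:ℝ):ℂ) * Complex.I) = -(((π:ℝ):ℂ) * Complex.I) by ring,
    Complex.exp_neg, Complex.exp_pi_mul_I]
  norm_num

lemma hmD : Complex.exp (-((-(π/2):ℝ):ℂ) * Complex.I) = Complex.I := by
  rw [show (-((-(π/2):ℝ):ℂ) * Complex.I) = (((π/2:ℝ)):ℂ) * Complex.I by push_cast; ring,
    exp_pi_div_two]

def Good (pa pb pc pd : ℂ) : Prop :=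
  0 ≤ ((pc - pa) * conj (pb - pa)).re ∧
  ((pd - pb) * conj (pb - pa)).re ≤ 0 ∧
  ((pd - pc) * conj (pb - pa)).re ≤ 0 ∧
  0 ≤ ((pc - pa) * conj (pb - pa)).im ∧
  0 ≤ ((pd - pa) * conj (pb - pa)).im

lemma scheme (pa pb pc pd : ℂ) (hab : pb - pa ≠ 0) (hg : Good pa pb pc pd) :
    ∃ θa θb θc θd : ℝ,
      (pb ∈ Wedge pa θa (π/2) ∧ pa ∈ Wedge pb θb (π/2)) ∧
      (pc ∈ Wedge pa θa (π/2) ∧ pa ∈ Wedge pc θc (π/2)) ∧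
      (pd ∈ Wedge pb θb (π/2) ∧ pb ∈ Wedge pd θd (π/2)) ∧
      ∀ x : ℂ, x ∈ Wedge pa θa (π/2) ∨ x ∈ Wedge pb θb (π/2) ∨
        x ∈ Wedge pc θc (π/2) ∨ x ∈ Wedge pd θd (π/2) := by
  obtain ⟨g1, g2, g3, g4, g5⟩ := hg
  set w : ℂ := pb - pa with hwdef
  -- real atoms
  set ν : ℝ := Complex.normSq w with hν
  have hν0 : 0 ≤ ν := Complex.normSq_nonneg w
  have hww : w * conj w = (ν : ℂ) := by rw [Complex.mul_conj]
  -- difference relations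
  have hsub : ∀ z1 z2 : ℂ, (z1 - z2) * conj w
      = ((z1 - pa) * conj w) - ((z2 - pa) * conj w) := by intro z1 z2; ring
  -- atoms
  set α : ℝ := ((pc - pa) * conj w).re with hα
  set γ : ℝ := ((pc - pa) * conj w).im with hγ
  set β : ℝ := ((pd - pa) * conj w).re with hβ
  set δ' : ℝ := ((pd - pa) * conj w).im with hδ
  have hba : (pb - pa) * conj w = (ν : ℂ) := by rw [hwdef]; rw [← hwdef, hww]
  have hbar : ((pb - pa) * conj w).re = ν := by rw [hba]; simp
  have hbai : ((pb - pa) * conj w).im = 0 := by rw [hba]; simp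
  -- g2 g3 in atoms
  have g2' : β - ν ≤ 0 := by
    have := g2
    rw [show pd - pb = (pd - pa) - (pb - pa) from by ring] at this
    rw [sub_mul, Complex.sub_re, hbar] at this
    exact this
  have g3' : β - α ≤ 0 := by
    have := g3
    rw [show pd - pc = (pd - pa) - (pc - pa) from by ring] at this
    rw [sub_mul, Complex.sub_re] at this
    exact this
  -- multiplier re/im computations
  have m1 : ∀ ζ : ℂ, (ζ * (1:ℂ)).re = ζ.re ∧ (ζ * (1:ℂ)).im = ζ.im := by
    intro ζ; simp
  have mI : ∀ ζ : ℂ, (ζ * -Complex.I).re = ζ.im ∧ (ζ * -Complex.I).im = -ζ.re := by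
    intro ζ; constructor <;> simp
  have mN : ∀ ζ : ℂ, (ζ * (-1:ℂ)).re = -ζ.re ∧ (ζ * (-1:ℂ)).im = -ζ.im := by
    intro ζ; constructor <;> simp
  have mP : ∀ ζ : ℂ, (ζ * Complex.I).re = -ζ.im ∧ (ζ * Complex.I).im = ζ.re := by
    intro ζ; constructor <;> simp
  refine ⟨w.arg + 0, w.arg + π/2, w.arg + π, w.arg + (-(π/2)), ⟨?_, ?_⟩, ⟨?_, ?_⟩, ⟨?_, ?_⟩, ?_⟩
  · -- pb ∈ Wedge pa
    rw [wedge_mem_iff' w hab pa pb 0 1 hm0]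
    rw [(m1 _).1, (m1 _).2, hbar, hbai]
    exact ⟨hν0, le_refl 0⟩
  · -- pa ∈ Wedge pb
    rw [wedge_mem_iff' w hab pb pa (π/2) (-Complex.I) hmB]
    rw [(mI _).1, (mI _).2]
    rw [hsub pa pb, Complex.sub_re, Complex.sub_im, hbar, hbai]
    have hpaa : (pa - pa) * conj w = 0 := by ring
    rw [hpaa]
    simp [hν0]
  · -- pc ∈ Wedge pa
    rw [wedge_mem_iff' w hab pa pc 0 1 hm0]
    rw [(m1 _).1, (m1 _).2, ← hα, ← hγ]
    exact ⟨g1, g4⟩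
  · -- pa ∈ Wedge pc
    rw [wedge_mem_iff' w hab pc pa π (-1) hmC]
    rw [(mN _).1, (mN _).2]
    rw [hsub pa pc, Complex.sub_re, Complex.sub_im, ← hα, ← hγ]
    have hpaa : (pa - pa) * conj w = 0 := by ring
    rw [hpaa]
    constructor
    · simp; linarith
    · simp; linarith
  · -- pd ∈ Wedge pb
    rw [wedge_mem_iff' w hab pb pd (π/2) (-Complex.I) hmB]
    rw [(mI _).1, (mI _).2]
    rw [hsub pd pb, Complex.sub_re, Complex.sub_im, hbar, hbai, ← hβ, ← hδ]
    constructor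
    · linarith
    · linarith
  · -- pb ∈ Wedge pd
    rw [wedge_mem_iff' w hab pd pb (-(π/2)) Complex.I hmD]
    rw [(mP _).1, (mP _).2]
    rw [hsub pb pd, Complex.sub_re, Complex.sub_im, hbar, hbai, ← hβ, ← hδ]
    constructor
    · linarith
    · linarith
  · -- coverage
    intro x
    set pr : ℝ := ((x - pa) * conj w).re with hpr
    set pim : ℝ := ((x - pa) * conj w).im with hpim
    by_cases hA : 0 ≤ pr ∧ 0 ≤ pim
    · left
      rw [wedge_mem_iff' w hab pa x 0 1 hm0, (m1 _).1, (m1 _).2, ← hpr, ← hpim]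
      exact hA
    by_cases hC : pr ≤ α ∧ pim ≤ γ
    · right; right; left
      rw [wedge_mem_iff' w hab pc x π (-1) hmC, (mN _).1, (mN _).2]
      rw [hsub x pc, Complex.sub_re, Complex.sub_im, ← hα, ← hγ, ← hpr, ← hpim]
      constructor
      · simp; linarith [hC.1]
      · simp; linarith [hC.2]
    push_neg at hA hC
    rcases le_or_gt 0 pr with hpr0 | hpr0
    · -- then pim < 0 : use W_d
      have hpim0 : pim < 0 := hA hpr0
      right; right; right
      rw [wedge_mem_iff' w hab pd x (-(π/2)) Complex.I hmD, (mP _).1, (mP _).2]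
      rw [hsub x pd, Complex.sub_re, Complex.sub_im, ← hβ, ← hδ, ← hpr, ← hpim]
      have hαlt : α < pr := by
        by_contra h
        push_neg at h
        have := hC h
        linarith
      constructor
      · simp; linarith
      · linarith
    · -- pr < 0: use W_b
      right; left
      rw [wedge_mem_iff' w hab pb x (π/2) (-Complex.I) hmB, (mI _).1, (mI _).2]
      rw [hsub x pb, Complex.sub_re, Complex.sub_im, hbar, hbai, ← hpr, ← hpim]
      have hγlt : γ < pim := hC (by linarith)
      constructor
      · linarith
      · linarith

lemma good_pair (A B R1 R2 : ℂ)
    (h6 : 0 ≤ ((R1 - A) * conj (B - A)).im) (h7 : 0 ≤ ((R2 - A) * conj (B - A)).im)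
    (h3 : 0 ≤ ((R1 - A) * conj (B - A)).re ∨ 0 ≤ ((R2 - A) * conj (B - A)).re)
    (h4 : ((R1 - B) * conj (B - A)).re ≤ 0 ∨ ((R2 - B) * conj (B - A)).re ≤ 0) :
    Good A B R1 R2 ∨ Good A B R2 R1 := by
  have e1 : ∀ R : ℂ, (R - B) * conj (B - A)
      = ((R - A) * conj (B - A)) - ((B - A) * conj (B - A)) := by intro R; ring
  have e2 : ∀ R S : ℂ, (R - S) * conj (B - A)
      = ((R - A) * conj (B - A)) - ((S - A) * conj (B - A)) := by intro R S; ring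
  set l1 : ℝ := ((R1 - A) * conj (B - A)).re with hl1
  set l2 : ℝ := ((R2 - A) * conj (B - A)).re with hl2
  set L : ℝ := ((B - A) * conj (B - A)).re with hL
  have h4' : l1 - L ≤ 0 ∨ l2 - L ≤ 0 := by
    rcases h4 with h | h
    · left; rw [e1 R1, Complex.sub_re] at h; exact h
    · right; rw [e1 R2, Complex.sub_re] at h; exact h
  rcases le_total l1 l2 with hord | hord
  · right
    refine ⟨?_, ?_, ?_, h7, h6⟩
    · rcases h3 with h | h
      · linarith
      · exact h
    · rw [e1 R1, Complex.sub_re, ← hl1, ← hL]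
      rcases h4' with h | h
      · exact h
      · linarith
    · rw [e2 R1 R2, Complex.sub_re, ← hl1, ← hl2]; linarith
  · left
    refine ⟨?_, ?_, ?_, h6, h7⟩
    · rcases h3 with h | h
      · exact h
      · linarith
    · rw [e1 R2, Complex.sub_re, ← hl2, ← hL]
      rcases h4' with h | h
      · linarith
      · exact h
    · rw [e2 R2 R1, Complex.sub_re, ← hl1, ← hl2]; linarith

private lemma nn_of_mul (G L : ℝ) (hL : 0 < L) (h : 0 ≤ G * L) : 0 ≤ G :=
  le_of_mul_le_mul_right (by simpa using h) hL

private lemma np_of_mul (G L : ℝ) (hL : 0 < L) (h : G * L ≤ 0) : G ≤ 0 :=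
  le_of_mul_le_mul_right (by simpa using h) hL

lemma dist_sq_le (z1 z2 u1 u2 : ℂ) (h : dist z1 z2 ≤ dist u1 u2) :
    (z1.re - z2.re)*(z1.re - z2.re) + (z1.im - z2.im)*(z1.im - z2.im)
      ≤ (u1.re - u2.re)*(u1.re - u2.re) + (u1.im - u2.im)*(u1.im - u2.im) := by
  have h0 : ‖z1 - z2‖ ≤ ‖u1 - u2‖ := by
    rwa [Complex.dist_eq, Complex.dist_eq] at h
  have h1 := mul_self_le_mul_self (norm_nonneg _) h0
  rw [← sq, ← sq, ← Complex.normSq_eq_norm_sq, ← Complex.normSq_eq_norm_sq] at h1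
  simpa [Complex.normSq_apply, Complex.sub_re, Complex.sub_im] using h1

lemma good_mixed (A B X Y : ℂ) (hAB : A ≠ B)
    (hXA : dist X A ≤ dist A B) (hXB : dist X B ≤ dist A B)
    (hYA : dist Y A ≤ dist A B) (hYB : dist Y B ≤ dist A B)
    (hX : 0 ≤ ((X - A) * conj (B - A)).im) (hY : ((Y - A) * conj (B - A)).im ≤ 0) :
    (Good X A B Y ∨ Good X A Y B) ∨ (Good B X A Y ∨ Good B X Y A) := by
  have HXA := dist_sq_le X A A B hXA
  have HXB := dist_sq_le X B A B hXB
  have HYA := dist_sq_le Y A A B hYA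
  have HYB := dist_sq_le Y B A B hYB
  have hL2 : 0 < ((A.re - B.re)*(A.re - B.re) + (A.im - B.im)*(A.im - B.im)) := by
    have hne : A - B ≠ 0 := sub_ne_zero.mpr hAB
    have h2 := Complex.normSq_pos.mpr hne
    simpa [Complex.normSq_apply, Complex.sub_re, Complex.sub_im] using h2
  have cX : 0 ≤ ((X.im - A.im)*(B.re - A.re) - (X.re - A.re)*(B.im - A.im)) := by
    have h := hX
    simp only [Complex.mul_im, Complex.mul_re, Complex.sub_re, Complex.sub_im, Complex.conj_re, Complex.conj_im] at h
    linarith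
  have cY : ((Y.im - A.im)*(B.re - A.re) - (Y.re - A.re)*(B.im - A.im)) ≤ 0 := by
    have h := hY
    simp only [Complex.mul_im, Complex.mul_re, Complex.sub_re, Complex.sub_im, Complex.conj_re, Complex.conj_im] at h
    linarith
  have lX0 : 0 ≤ ((X.re - A.re)*(B.re - A.re) + (X.im - A.im)*(B.im - A.im)) := by linarith [HXB, mul_self_nonneg (X.re - A.re), mul_self_nonneg (X.im - A.im)]
  have lY0 : 0 ≤ ((Y.re - A.re)*(B.re - A.re) + (Y.im - A.im)*(B.im - A.im)) := by linarith [HYB, mul_self_nonneg (Y.re - A.re), mul_self_nonneg (Y.im - A.im)]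
  have lX1 : ((X.re - A.re)*(B.re - A.re) + (X.im - A.im)*(B.im - A.im)) ≤ ((A.re - B.re)*(A.re - B.re) + (A.im - B.im)*(A.im - B.im)) := by linarith [HXA, mul_self_nonneg (X.re - B.re), mul_self_nonneg (X.im - B.im)]
  have lY1 : ((Y.re - A.re)*(B.re - A.re) + (Y.im - A.im)*(B.im - A.im)) ≤ ((A.re - B.re)*(A.re - B.re) + (A.im - B.im)*(A.im - B.im)) := by linarith [HYA, mul_self_nonneg (Y.re - B.re), mul_self_nonneg (Y.im - B.im)]
  rcases le_total ((Y.re - A.re)*(B.re - A.re) + (Y.im - A.im)*(B.im - A.im)) ((X.re - A.re)*(B.re - A.re) + (X.im - A.im)*(B.im - A.im)) with hord | hord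
  · -- pair (X, A)
    have F2c : 0 ≤ ((Y.im - X.im)*(A.re - X.re) - (Y.re - X.re)*(A.im - X.im)) := by
      apply nn_of_mul _ ((A.re - B.re)*(A.re - B.re) + (A.im - B.im)*(A.im - B.im)) hL2
      have key : ((Y.im - X.im)*(A.re - X.re) - (Y.re - X.re)*(A.im - X.im)) * ((A.re - B.re)*(A.re - B.re) + (A.im - B.im)*(A.im - B.im)) = ((X.im - A.im)*(B.re - A.re) - (X.re - A.re)*(B.im - A.im)) * ((Y.re - A.re)*(B.re - A.re) + (Y.im - A.im)*(B.im - A.im)) - ((X.re - A.re)*(B.re - A.re) + (X.im - A.im)*(B.im - A.im)) * ((Y.im - A.im)*(B.re - A.re) - (Y.re - A.re)*(B.im - A.im)) := by ring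
      rw [key]
      have p1 : 0 ≤ ((X.im - A.im)*(B.re - A.re) - (X.re - A.re)*(B.im - A.im)) * ((Y.re - A.re)*(B.re - A.re) + (Y.im - A.im)*(B.im - A.im)) := mul_nonneg cX lY0
      have p2 : 0 ≤ ((X.re - A.re)*(B.re - A.re) + (X.im - A.im)*(B.im - A.im)) * (-((Y.im - A.im)*(B.re - A.re) - (Y.re - A.re)*(B.im - A.im))) := mul_nonneg lX0 (by linarith)
      nlinarith [p1, p2]
    have F3c : 0 ≤ ((Y.re - X.re)*(A.re - X.re) + (Y.im - X.im)*(A.im - X.im)) := by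
      apply nn_of_mul _ ((A.re - B.re)*(A.re - B.re) + (A.im - B.im)*(A.im - B.im)) hL2
      have key : ((Y.re - X.re)*(A.re - X.re) + (Y.im - X.im)*(A.im - X.im)) * ((A.re - B.re)*(A.re - B.re) + (A.im - B.im)*(A.im - B.im)) = ((X.re - A.re)*(B.re - A.re) + (X.im - A.im)*(B.im - A.im)) * (((X.re - A.re)*(B.re - A.re) + (X.im - A.im)*(B.im - A.im)) - ((Y.re - A.re)*(B.re - A.re) + (Y.im - A.im)*(B.im - A.im))) + ((X.im - A.im)*(B.re - A.re) - (X.re - A.re)*(B.im - A.im)) * (((X.im - A.im)*(B.re - A.re) - (X.re - A.re)*(B.im - A.im)) - ((Y.im - A.im)*(B.re - A.re) - (Y.re - A.re)*(B.im - A.im))) := by ring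
      rw [key]
      have p1 : 0 ≤ ((X.re - A.re)*(B.re - A.re) + (X.im - A.im)*(B.im - A.im)) * (((X.re - A.re)*(B.re - A.re) + (X.im - A.im)*(B.im - A.im)) - ((Y.re - A.re)*(B.re - A.re) + (Y.im - A.im)*(B.im - A.im))) := mul_nonneg lX0 (by linarith)
      have p2 : 0 ≤ ((X.im - A.im)*(B.re - A.re) - (X.re - A.re)*(B.im - A.im)) * (((X.im - A.im)*(B.re - A.re) - (X.re - A.re)*(B.im - A.im)) - ((Y.im - A.im)*(B.re - A.re) - (Y.re - A.re)*(B.im - A.im))) := mul_nonneg cX (by linarith)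
      linarith
    have F1 : 0 ≤ ((B - X) * conj (A - X)).im := by
      simp only [Complex.mul_im, Complex.mul_re, Complex.sub_re, Complex.sub_im, Complex.conj_re, Complex.conj_im]
      linarith [cX]
    have F2 : 0 ≤ ((Y - X) * conj (A - X)).im := by
      simp only [Complex.mul_im, Complex.mul_re, Complex.sub_re, Complex.sub_im, Complex.conj_re, Complex.conj_im]
      linarith [F2c]
    have F3 : 0 ≤ ((Y - X) * conj (A - X)).re := by
      simp only [Complex.mul_im, Complex.mul_re, Complex.sub_re, Complex.sub_im, Complex.conj_re, Complex.conj_im]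
      linarith [F3c]
    have F4 : ((B - A) * conj (A - X)).re ≤ 0 := by
      simp only [Complex.mul_im, Complex.mul_re, Complex.sub_re, Complex.sub_im, Complex.conj_re, Complex.conj_im]
      linarith [lX0]
    exact Or.inl (good_pair X A B Y F1 F2 (Or.inr F3) (Or.inl F4))
  · -- pair (B, X)
    have G2c : 0 ≤ ((Y.im - B.im)*(X.re - B.re) - (Y.re - B.re)*(X.im - B.im)) := by
      apply nn_of_mul _ ((A.re - B.re)*(A.re - B.re) + (A.im - B.im)*(A.im - B.im)) hL2
      have key : ((Y.im - B.im)*(X.re - B.re) - (Y.re - B.re)*(X.im - B.im)) * ((A.re - B.re)*(A.re - B.re) + (A.im - B.im)*(A.im - B.im)) = ((Y.im - A.im)*(B.re - A.re) - (Y.re - A.re)*(B.im - A.im)) * (((X.re - A.re)*(B.re - A.re) + (X.im - A.im)*(B.im - A.im)) - ((A.re - B.re)*(A.re - B.re) + (A.im - B.im)*(A.im - B.im))) + ((X.im - A.im)*(B.re - A.re) - (X.re - A.re)*(B.im - A.im)) * (((A.re - B.re)*(A.re - B.re) + (A.im - B.im)*(A.im - B.im)) - ((Y.re - A.re)*(B.re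 - A.re) + (Y.im - A.im)*(B.im - A.im))) := by ring
      rw [key]
      have p1 : 0 ≤ (-((Y.im - A.im)*(B.re - A.re) - (Y.re - A.re)*(B.im - A.im))) * (((A.re - B.re)*(A.re - B.re) + (A.im - B.im)*(A.im - B.im)) - ((X.re - A.re)*(B.re - A.re) + (X.im - A.im)*(B.im - A.im))) := mul_nonneg (by linarith) (by linarith)
      have p2 : 0 ≤ ((X.im - A.im)*(B.re - A.re) - (X.re - A.re)*(B.im - A.im)) * (((A.re - B.re)*(A.re - B.re) + (A.im - B.im)*(A.im - B.im)) - ((Y.re - A.re)*(B.re - A.re) + (Y.im - A.im)*(B.im - A.im))) := mul_nonneg cX (by linarith)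
      nlinarith [p1, p2]
    have G4c : ((Y.re - X.re)*(X.re - B.re) + (Y.im - X.im)*(X.im - B.im)) ≤ 0 := by
      apply np_of_mul _ ((A.re - B.re)*(A.re - B.re) + (A.im - B.im)*(A.im - B.im)) hL2
      have key : ((Y.re - X.re)*(X.re - B.re) + (Y.im - X.im)*(X.im - B.im)) * ((A.re - B.re)*(A.re - B.re) + (A.im - B.im)*(A.im - B.im)) = (((A.re - B.re)*(A.re - B.re) + (A.im - B.im)*(A.im - B.im)) - ((X.re - A.re)*(B.re - A.re) + (X.im - A.im)*(B.im - A.im))) * (((X.re - A.re)*(B.re - A.re) + (X.im - A.im)*(B.im - A.im)) - ((Y.re - A.re)*(B.re - A.re) + (Y.im - A.im)*(B.im - A.im))) - ((X.im - A.im)*(B.re - A.re) - (X.re - A.re)*(B.im - A.im)) * (((X.im - A.im)*(B.re - A.re) - (X.re - A.re)*(B.im - A.im)) - ((Y.im - A.im)*(B.re - A.re) - (Y.re - A.re)*(B.im - A.im))) := by ring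
      rw [key]
      have p1 : (((A.re - B.re)*(A.re - B.re) + (A.im - B.im)*(A.im - B.im)) - ((X.re - A.re)*(B.re - A.re) + (X.im - A.im)*(B.im - A.im))) * (((X.re - A.re)*(B.re - A.re) + (X.im - A.im)*(B.im - A.im)) - ((Y.re - A.re)*(B.re - A.re) + (Y.im - A.im)*(B.im - A.im))) ≤ 0 := mul_nonpos_of_nonneg_of_nonpos (by linarith) (by linarith)
      have p2 : 0 ≤ ((X.im - A.im)*(B.re - A.re) - (X.re - A.re)*(B.im - A.im)) * (((X.im - A.im)*(B.re - A.re) - (X.re - A.re)*(B.im - A.im)) - ((Y.im - A.im)*(B.re - A.re) - (Y.re - A.re)*(B.im - A.im))) := mul_nonneg cX (by linarith)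
      linarith
    have h6B : 0 ≤ ((A - B) * conj (X - B)).im := by
      simp only [Complex.mul_im, Complex.mul_re, Complex.sub_re, Complex.sub_im, Complex.conj_re, Complex.conj_im]
      linarith [cX]
    have G2 : 0 ≤ ((Y - B) * conj (X - B)).im := by
      simp only [Complex.mul_im, Complex.mul_re, Complex.sub_re, Complex.sub_im, Complex.conj_re, Complex.conj_im]
      linarith [G2c]
    have h3B : 0 ≤ ((A - B) * conj (X - B)).re := by
      simp only [Complex.mul_im, Complex.mul_re, Complex.sub_re, Complex.sub_im, Complex.conj_re, Complex.conj_im]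
      linarith [lX1]
    have G4 : ((Y - X) * conj (X - B)).re ≤ 0 := by
      simp only [Complex.mul_im, Complex.mul_re, Complex.sub_re, Complex.sub_im, Complex.conj_re, Complex.conj_im]
      linarith [G4c]
    exact Or.inr (good_pair B X A Y h6B G2 (Or.inl h3B) (Or.inr G4))

lemma diam_lam (A B R : ℂ) (h : dist R B ≤ dist A B) :
    0 ≤ ((R - A) * conj (B - A)).re := by
  have H := dist_sq_le R B A B h
  simp only [Complex.mul_re, Complex.sub_re, Complex.sub_im, Complex.conj_re, Complex.conj_im]
  nlinarith [H, mul_self_nonneg (R.re - A.re), mul_self_nonneg (R.im - A.im)]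

lemma diam_lam' (A B R : ℂ) (h : dist R A ≤ dist A B) :
    ((R - B) * conj (B - A)).re ≤ 0 := by
  have H := dist_sq_le R A A B h
  simp only [Complex.mul_re, Complex.sub_re, Complex.sub_im, Complex.conj_re, Complex.conj_im]
  nlinarith [H, mul_self_nonneg (R.re - B.re), mul_self_nonneg (R.im - B.im)]

lemma cross_flip (A B R : ℂ) :
    ((R - B) * conj (A - B)).im = -(((R - A) * conj (B - A)).im) := by
  simp only [Complex.mul_im, Complex.sub_re, Complex.sub_im, Complex.conj_re, Complex.conj_im]
  ring

lemma exists_good (p : Fin 4 → ℂ) (hinj : Function.Injective p) :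
    ∃ ia ib ic id : Fin 4, ia ≠ ib ∧ ia ≠ ic ∧ ia ≠ id ∧ ib ≠ ic ∧ ib ≠ id ∧ ic ≠ id ∧
      Good (p ia) (p ib) (p ic) (p id) := by
  obtain ⟨q, -, hmax'⟩ := Finset.exists_max_image (Finset.univ : Finset (Fin 4 × Fin 4))
    (fun q => dist (p q.1) (p q.2)) ⟨(0,1), Finset.mem_univ _⟩
  obtain ⟨i, j⟩ := q
  have hmax : ∀ a b : Fin 4, dist (p a) (p b) ≤ dist (p i) (p j) := by
    intro a b; exact hmax' (a, b) (Finset.mem_univ _)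
  have hij : i ≠ j := by
    rintro rfl
    have h01 := hmax 0 1
    have hne : p 0 ≠ p 1 := fun h => by exact absurd (hinj h) (by decide)
    have : (0:ℝ) < dist (p 0) (p 1) := dist_pos.mpr hne
    simp at h01
    exact hne h01
  obtain ⟨k, l, hik, hil, hjk, hjl, hkl⟩ :=
    (by decide : ∀ i j : Fin 4, i ≠ j → ∃ k l : Fin 4, i ≠ k ∧ i ≠ l ∧ j ≠ k ∧ j ≠ l ∧ k ≠ l)
      i j hij
  have hABne : p i ≠ p j := fun h => hij (hinj h)
  have hBAne : p j ≠ p i := fun h => hij (hinj h.symm)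
  have dXA : dist (p k) (p i) ≤ dist (p i) (p j) := hmax k i
  have dXB : dist (p k) (p j) ≤ dist (p i) (p j) := hmax k j
  have dYA : dist (p l) (p i) ≤ dist (p i) (p j) := hmax l i
  have dYB : dist (p l) (p j) ≤ dist (p i) (p j) := hmax l j
  have dXA' : dist (p k) (p i) ≤ dist (p j) (p i) := by rwa [dist_comm (p j) (p i)]
  have dXB' : dist (p k) (p j) ≤ dist (p j) (p i) := by rwa [dist_comm (p j) (p i)]
  have dYA' : dist (p l) (p i) ≤ dist (p j) (p i) := by rwa [dist_comm (p j) (p i)]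
  have dYB' : dist (p l) (p j) ≤ dist (p j) (p i) := by rwa [dist_comm (p j) (p i)]
  rcases le_total 0 (((p k - p i) * conj (p j - p i)).im) with cX | cX
  · rcases le_total 0 (((p l - p i) * conj (p j - p i)).im) with cY | cY
    · -- both up : pair (A, B)
      rcases good_pair (p i) (p j) (p k) (p l) cX cY
          (Or.inl (diam_lam (p i) (p j) (p k) dXB))
          (Or.inl (diam_lam' (p i) (p j) (p k) dXA)) with g | g
      · exact ⟨i, j, k, l, hij, hik, hil, hjk, hjl, hkl, g⟩
      · exact ⟨i, j, l, k, hij, hil, hik, hjl, hjk, hkl.symm, g⟩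
    · -- mixed : X up, Y down
      rcases good_mixed (p i) (p j) (p k) (p l) hABne dXA dXB dYA dYB cX cY with (g|g)|(g|g)
      · exact ⟨k, i, j, l, hik.symm, hjk.symm, hkl, hij, hil, hjl, g⟩
      · exact ⟨k, i, l, j, hik.symm, hkl, hjk.symm, hil, hij, hjl.symm, g⟩
      · exact ⟨j, k, i, l, hjk, hij.symm, hjl, hik.symm, hkl, hil, g⟩
      · exact ⟨j, k, l, i, hjk, hjl, hij.symm, hkl, hik.symm, hil.symm, g⟩
  · rcases le_total 0 (((p l - p i) * conj (p j - p i)).im) with cY | cY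
    · -- mixed : Y up, X down
      rcases good_mixed (p i) (p j) (p l) (p k) hABne dYA dYB dXA dXB cY cX with (g|g)|(g|g)
      · exact ⟨l, i, j, k, hil.symm, hjl.symm, hkl.symm, hij, hik, hjk, g⟩
      · exact ⟨l, i, k, j, hil.symm, hkl.symm, hjl.symm, hik, hij, hjk.symm, g⟩
      · exact ⟨j, l, i, k, hjl, hij.symm, hjk, hil.symm, hkl.symm, hik, g⟩
      · exact ⟨j, l, k, i, hjl, hjk, hij.symm, hkl.symm, hil.symm, hik.symm, g⟩
    · -- both down : pair (B, A)
      have cX' : 0 ≤ ((p k - p j) * conj (p i - p j)).im := by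
        rw [cross_flip (p i) (p j) (p k)]; linarith
      have cY' : 0 ≤ ((p l - p j) * conj (p i - p j)).im := by
        rw [cross_flip (p i) (p j) (p l)]; linarith
      rcases good_pair (p j) (p i) (p k) (p l) cX' cY'
          (Or.inl (diam_lam (p j) (p i) (p k) dXA'))
          (Or.inl (diam_lam' (p j) (p i) (p k) dXB')) with g | g
      · exact ⟨j, i, k, l, hij.symm, hjk, hjl, hik, hil, hkl, g⟩
      · exact ⟨j, i, l, k, hij.symm, hjl, hjk, hil, hik, hkl.symm, g⟩

private lemma connected_of_path {G : SimpleGraph (Fin 4)} (ia ib ic id : Fin 4)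
    (hall : ∀ v : Fin 4, v = ia ∨ v = ib ∨ v = ic ∨ v = id)
    (h1 : G.Adj ia ib) (h2 : G.Adj ia ic) (h3 : G.Adj ib id) : G.Connected := by
  have hub : ∀ v : Fin 4, G.Reachable ia v := by
    intro v
    rcases hall v with rfl | rfl | rfl | rfl
    · exact SimpleGraph.Reachable.refl _
    · exact h1.reachable
    · exact h2.reachable
    · exact h1.reachable.trans h3.reachable
  have hpre : G.Preconnected := fun u v => (hub u).symm.trans (hub v)
  exact ⟨hpre⟩

/-- For any set of four (distinct) points in the plane, one can assign to
each point a closed quadrant wedge (angle π/2, unbounded range) apexed at that point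
such that the induced symmetric communication graph is connected and the union of the
four wedges is the entire plane. -/
theorem four_points_connected_coverage (p : Fin 4 → ℂ) (hinj : Function.Injective p) :
    ∃ θ : Fin 4 → ℝ,
      (SimpleGraph.fromRel (fun i j =>
        p j ∈ Wedge (p i) (θ i) (π / 2) ∧ p i ∈ Wedge (p j) (θ j) (π / 2))).Connected ∧
      (⋃ i, Wedge (p i) (θ i) (π / 2)) = Set.univ := by
  obtain ⟨ia, ib, ic, id, hab, hac, had, hbc, hbd, hcd, hgood⟩ := exists_good p hinj
  have hpab : p ib - p ia ≠ 0 := sub_ne_zero.mpr (fun h => hab (hinj h.symm))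
  obtain ⟨θa, θb, θc, θd, ⟨e1, e1'⟩, ⟨e2, e2'⟩, ⟨e3, e3'⟩, hcov⟩ :=
    scheme (p ia) (p ib) (p ic) (p id) hpab hgood
  classical
  set θf : Fin 4 → ℝ :=
    fun v => if v = ia then θa else if v = ib then θb else if v = ic then θc else θd with hθf
  have Ta : θf ia = θa := by simp [hθf]
  have Tb : θf ib = θb := by
    simp only [hθf]; rw [if_neg (Ne.symm hab)]; simp
  have Tc : θf ic = θc := by
    simp only [hθf]; rw [if_neg (Ne.symm hac), if_neg (Ne.symm hbc)]; simp
  have Td : θf id = θd := by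
    simp only [hθf]; rw [if_neg (Ne.symm had), if_neg (Ne.symm hbd), if_neg (Ne.symm hcd)]
  have hall := (by decide :
      ∀ a b c d : Fin 4, a ≠ b → a ≠ c → a ≠ d → b ≠ c → b ≠ d → c ≠ d →
        ∀ v : Fin 4, v = a ∨ v = b ∨ v = c ∨ v = d) ia ib ic id hab hac had hbc hbd hcd
  refine ⟨θf, ?_, ?_⟩
  · apply connected_of_path ia ib ic id hall
    · rw [SimpleGraph.fromRel_adj]
      refine ⟨hab, Or.inl ⟨?_, ?_⟩⟩
      · rw [Ta]; exact e1
      · rw [Tb]; exact e1'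
    · rw [SimpleGraph.fromRel_adj]
      refine ⟨hac, Or.inl ⟨?_, ?_⟩⟩
      · rw [Ta]; exact e2
      · rw [Tc]; exact e2'
    · rw [SimpleGraph.fromRel_adj]
      refine ⟨hbd, Or.inl ⟨?_, ?_⟩⟩
      · rw [Tb]; exact e3
      · rw [Td]; exact e3'
  · rw [Set.eq_univ_iff_forall]
    intro x
    rcases hcov x with h | h | h | h
    · exact Set.mem_iUnion.mpr ⟨ia, by rwa [Ta]⟩
    · exact Set.mem_iUnion.mpr ⟨ib, by rwa [Tb]⟩
    · exact Set.mem_iUnion.mpr ⟨ic, by rwa [Tc]⟩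
    · exact Set.mem_iUnion.mpr ⟨id, by rwa [Td]⟩
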